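/- arXiv:2206.04840 — 3 statements merged into one kernel-verified Lean document; each statement's English description precedes it below -/
import Mathlib

section
/- Let f and g be strictly increasing homeomorphisms of ℝ, each with exactly one fixed point x₁ (resp. y₁), such that the sign of f(x) − x on (−∞, x₁) equals the sign of g(y) − y on (−∞, y₁), and similarly on (x₁, ∞) and (y₁, ∞). Then f and g are topologically conjugate by an increasing homeomorphism. -/
open Set Function Filter Topology

private lemma zpow_apply_add' (E : ℝ ≃o ℝ) (m n : ℤ) (x : ℝ) :
    (E ^ (m + n)) x = (E ^ m) ((E ^ n) x) := by
  rw [zpow_add]; rfl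

private lemma zpow_succ_apply' (E : ℝ ≃o ℝ) (n : ℤ) (x : ℝ) :
    (E ^ (n + 1)) x = E ((E ^ n) x) := by
  rw [add_comm, zpow_apply_add', zpow_one]

private lemma zpow_apply_succ' (E : ℝ ≃o ℝ) (n : ℤ) (x : ℝ) :
    (E ^ (n + 1)) x = (E ^ n) (E x) := by
  rw [zpow_apply_add', zpow_one]

private lemma zpow_neg_cancel' (E : ℝ ≃o ℝ) (n : ℤ) (x : ℝ) :
    (E ^ (-n)) ((E ^ n) x) = x := by
  rw [← zpow_apply_add']; simp

private lemma zpow_cancel' (E : ℝ ≃o ℝ) (n : ℤ) (x : ℝ) :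
    (E ^ n) ((E ^ (-n)) x) = x := by
  have := zpow_neg_cancel' E (-n) x; rwa [neg_neg] at this

private lemma zpow_fixed' (E : ℝ ≃o ℝ) {c : ℝ} (hc : E c = c) (n : ℤ) : (E ^ n) c = c := by
  induction n using Int.induction_on with
  | zero => simp
  | succ k ih => rw [zpow_succ_apply', ih, hc]
  | pred k ih =>
      have hs : E.symm c = c := by
        conv_lhs => rw [← hc]
        exact E.symm_apply_apply c
      rw [show (-(k : ℤ) - 1) = (-1) + (-k) by ring, zpow_apply_add', ih]
      simpa [zpow_neg, zpow_one] using (show E⁻¹ c = c from hs)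

private lemma cover_exists' (E : ℝ ≃o ℝ) {c : ℝ} (hc : E c = c)
    (hE : ∀ x < c, x < E x) {x : ℝ} (hx : x < c) :
    ∃! n : ℤ, (E ^ n) (c - 1) ≤ x ∧ x < (E ^ (n + 1)) (c - 1) := by
  set A : ℤ → ℝ := fun n => (E ^ n) (c - 1) with hA
  have hAc : ∀ n, A n < c := fun n => by
    have := (E ^ n).strictMono (show c - 1 < c by linarith)
    rwa [zpow_fixed' E hc] at this
  have hstep : ∀ n, A (n + 1) = E (A n) := fun n => zpow_succ_apply' E n _
  have hmono : StrictMono A := strictMono_int_of_lt_succ (fun n => by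
    rw [hstep]; exact hE _ (hAc n))
  have hbddA : BddAbove (Set.range A) := ⟨c, by rintro _ ⟨n, rfl⟩; exact (hAc n).le⟩
  have htop : Tendsto A atTop (𝓝 (⨆ n, A n)) := tendsto_atTop_ciSup hmono.monotone hbddA
  have hshift : Tendsto (fun n : ℤ => n + 1) atTop atTop :=
    tendsto_atTop_atTop_of_monotone (fun a b hab => by omega) (fun b => ⟨b, by omega⟩)
  have hEL : E (⨆ n, A n) = (⨆ n, A n) := by
    have h1 : Tendsto (fun n : ℤ => A (n + 1)) atTop (𝓝 (⨆ n, A n)) := htop.comp hshift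
    have h2 : Tendsto (fun n : ℤ => E (A n)) atTop (𝓝 (E (⨆ n, A n))) :=
      (E.continuous.tendsto _).comp htop
    have heq : (fun n : ℤ => A (n + 1)) = fun n => E (A n) := funext hstep
    rw [heq] at h1
    exact tendsto_nhds_unique h2 h1
  have hsup : (⨆ n, A n) = c := by
    rcases lt_or_eq_of_le (ciSup_le (fun n => (hAc n).le)) with h | h
    · exact absurd hEL (hE _ h).ne'
    · exact h
  have hup : ∃ N, x < A N := exists_lt_of_lt_ciSup (hsup ▸ hx)
  have hlow : ∃ M, A M ≤ x := by
    by_contra hcon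
    push_neg at hcon
    have hbdd : BddBelow (Set.range A) := ⟨x, by rintro _ ⟨n, rfl⟩; exact (hcon n).le⟩
    have hbot : Tendsto A atBot (𝓝 (⨅ n, A n)) := tendsto_atBot_ciInf hmono.monotone hbdd
    have hshift' : Tendsto (fun n : ℤ => n + 1) atBot atBot :=
      tendsto_atBot_atBot_of_monotone (fun a b hab => by omega) (fun b => ⟨b - 1, by omega⟩)
    have h1 : Tendsto (fun n : ℤ => A (n + 1)) atBot (𝓝 (⨅ n, A n)) := hbot.comp hshift'
    have h2 : Tendsto (fun n : ℤ => E (A n)) atBot (𝓝 (E (⨅ n, A n))) :=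
      (E.continuous.tendsto _).comp hbot
    have heq : (fun n : ℤ => A (n + 1)) = fun n => E (A n) := funext hstep
    rw [heq] at h1
    have hfix : E (⨅ n, A n) = (⨅ n, A n) := tendsto_nhds_unique h2 h1
    have hIlt : (⨅ n, A n) < c := lt_of_le_of_lt (ciInf_le hbdd 0) (hAc 0)
    exact absurd hfix (hE _ hIlt).ne'
  obtain ⟨Nb, hNb⟩ := hup
  obtain ⟨n, hn1, hnmax⟩ := Int.exists_greatest_of_bdd (P := fun n => A n ≤ x)
    ⟨Nb, fun z hz => (hmono.lt_iff_lt.mp (lt_of_le_of_lt hz hNb)).le⟩ hlow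
  have hn2 : x < A (n + 1) := by
    by_contra hcon
    push_neg at hcon
    have := hnmax (n + 1) hcon
    omega
  refine ⟨n, ⟨hn1, hn2⟩, ?_⟩
  rintro m ⟨hm1, hm2⟩
  rcases lt_trichotomy m n with h | h | h
  · have := hmono.monotone (show m + 1 ≤ n by omega)
    linarith
  · exact h
  · have := hmono.monotone (show n + 1 ≤ m by omega)
    linarith

private lemma coord_mem' (E : ℝ ≃o ℝ) {c : ℝ} {n : ℤ} {x : ℝ}
    (h1 : (E ^ n) (c - 1) ≤ x) (h2 : x < (E ^ (n + 1)) (c - 1)) :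
    c - 1 ≤ (E ^ (-n)) x ∧ (E ^ (-n)) x < E (c - 1) := by
  constructor
  · have := (E ^ (-n)).monotone h1
    rwa [zpow_neg_cancel'] at this
  · have := (E ^ (-n)).strictMono h2
    rwa [← zpow_apply_add', show -n + (n + 1) = 1 by ring, zpow_one] at this

private lemma half_conj (F G : ℝ → ℝ) (c d : ℝ)
    (hFm : StrictMono F) (hFb : Function.Bijective F)
    (hGm : StrictMono G) (hGb : Function.Bijective G)
    (hc : F c = c) (hd : G d = d)
    (hF : ∀ x < c, x < F x) (hG : ∀ y < d, y < G y) :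
    ∃ h : ℝ → ℝ, StrictMonoOn h (Set.Iio c) ∧ h '' Set.Iio c = Set.Iio d ∧
      ∀ x < c, h (F x) = G (h x) := by
  classical
  set EF : ℝ ≃o ℝ := hFm.orderIsoOfSurjective F hFb.2 with hEFdef
  set EG : ℝ ≃o ℝ := hGm.orderIsoOfSurjective G hGb.2 with hEGdef
  have hEFa : ∀ x, EF x = F x := fun _ => rfl
  have hEGa : ∀ x, EG x = G x := fun _ => rfl
  have hEFc : EF c = c := hc
  have hEGd : EG d = d := hd
  set A : ℤ → ℝ := fun n => (EF ^ n) (c - 1) with hA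
  set B : ℤ → ℝ := fun n => (EG ^ n) (d - 1) with hB
  have hAc : ∀ n, A n < c := fun n => by
    have := (EF ^ n).strictMono (show c - 1 < c by linarith)
    rwa [zpow_fixed' EF hEFc] at this
  have hBd : ∀ n, B n < d := fun n => by
    have := (EG ^ n).strictMono (show d - 1 < d by linarith)
    rwa [zpow_fixed' EG hEGd] at this
  have hAstep : ∀ n, A (n + 1) = F (A n) := fun n => zpow_succ_apply' EF n _
  have hBstep : ∀ n, B (n + 1) = G (B n) := fun n => zpow_succ_apply' EG n _
  have hAmono : StrictMono A := strictMono_int_of_lt_succ (fun n => by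
    rw [hAstep]; exact hF _ (hAc n))
  have hBmono : StrictMono B := strictMono_int_of_lt_succ (fun n => by
    rw [hBstep]; exact hG _ (hBd n))
  have hFa : c - 1 < F (c - 1) := hF _ (by linarith)
  have hGa : d - 1 < G (d - 1) := hG _ (by linarith)
  have hFne : F (c - 1) - (c - 1) ≠ 0 := by linarith
  have hGne : G (d - 1) - (d - 1) ≠ 0 := by linarith
  set ψ : ℝ → ℝ := fun t =>
    (d - 1) + (t - (c - 1)) * ((G (d - 1) - (d - 1)) / (F (c - 1) - (c - 1))) with hψdef
  set φ : ℝ → ℝ := fun s =>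
    (c - 1) + (s - (d - 1)) * ((F (c - 1) - (c - 1)) / (G (d - 1) - (d - 1))) with hφdef
  have hslope : 0 < (G (d - 1) - (d - 1)) / (F (c - 1) - (c - 1)) :=
    div_pos (by linarith) (by linarith)
  have hslope' : 0 < (F (c - 1) - (c - 1)) / (G (d - 1) - (d - 1)) :=
    div_pos (by linarith) (by linarith)
  have hψm : StrictMono ψ := fun s t hst => by
    show (d - 1) + (s - (c - 1)) * ((G (d - 1) - (d - 1)) / (F (c - 1) - (c - 1))) <
      (d - 1) + (t - (c - 1)) * ((G (d - 1) - (d - 1)) / (F (c - 1) - (c - 1)))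
    nlinarith
  have hφm : StrictMono φ := fun s t hst => by
    show (c - 1) + (s - (d - 1)) * ((F (c - 1) - (c - 1)) / (G (d - 1) - (d - 1))) <
      (c - 1) + (t - (d - 1)) * ((F (c - 1) - (c - 1)) / (G (d - 1) - (d - 1)))
    nlinarith
  have hψa : ψ (c - 1) = d - 1 := by
    show (d - 1) + ((c - 1) - (c - 1)) * ((G (d - 1) - (d - 1)) / (F (c - 1) - (c - 1))) = d - 1
    ring
  have hψb : ψ (F (c - 1)) = G (d - 1) := by
    show (d - 1) + (F (c - 1) - (c - 1)) * ((G (d - 1) - (d - 1)) / (F (c - 1) - (c - 1))) = G (d - 1)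
    field_simp
    ring
  have hφa : φ (d - 1) = c - 1 := by
    show (c - 1) + ((d - 1) - (d - 1)) * ((F (c - 1) - (c - 1)) / (G (d - 1) - (d - 1))) = c - 1
    ring
  have hφb : φ (G (d - 1)) = F (c - 1) := by
    show (c - 1) + (G (d - 1) - (d - 1)) * ((F (c - 1) - (c - 1)) / (G (d - 1) - (d - 1))) = F (c - 1)
    field_simp
    ring
  have hψφ : ∀ s, ψ (φ s) = s := by
    intro s
    show (d - 1) + (((c - 1) + (s - (d - 1)) * ((F (c - 1) - (c - 1)) / (G (d - 1) - (d - 1)))) - (c - 1)) *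
      ((G (d - 1) - (d - 1)) / (F (c - 1) - (c - 1))) = s
    field_simp
    ring
  have hcov := fun (x : ℝ) (hx : x < c) => cover_exists' EF hEFc hF hx
  choose! N hN using fun (x : ℝ) (hx : x < c) => (hcov x hx).exists
  have huniq : ∀ {x : ℝ}, x < c → ∀ {n : ℤ}, A n ≤ x → x < A (n + 1) → N x = n := by
    intro x hx n h1 h2
    exact (hcov x hx).unique (hN x hx) ⟨h1, h2⟩
  set h : ℝ → ℝ := fun x =>
    if x < c then (EG ^ (N x)) (ψ ((EF ^ (-(N x))) x)) else d with hhdef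
  have hval : ∀ {x : ℝ}, x < c →
      h x = (EG ^ (N x)) (ψ ((EF ^ (-(N x))) x)) ∧ B (N x) ≤ h x ∧ h x < B (N x + 1) := by
    intro x hx
    have hNx := hN x hx
    have hco := coord_mem' EF hNx.1 hNx.2
    rw [hEFa] at hco
    have hv : h x = (EG ^ (N x)) (ψ ((EF ^ (-(N x))) x)) := if_pos hx
    refine ⟨hv, ?_, ?_⟩
    · rw [hv]
      have h1 : d - 1 ≤ ψ ((EF ^ (-(N x))) x) := by
        have := hψm.monotone hco.1
        rwa [hψa] at this
      exact (EG ^ (N x)).monotone h1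
    · rw [hv]
      have h1 : ψ ((EF ^ (-(N x))) x) < G (d - 1) := by
        have := hψm hco.2
        rwa [hψb] at this
      have h2 := (EG ^ (N x)).strictMono h1
      have h3 : (EG ^ (N x)) (G (d - 1)) = B (N x + 1) := (zpow_apply_succ' EG (N x) _).symm
      rw [h3] at h2
      exact h2
  have hmonoOn : StrictMonoOn h (Set.Iio c) := by
    intro x hx x' hx' hlt
    have h1 := hval hx
    have h2 := hval hx'
    have hNle : N x ≤ N x' := by
      by_contra hcon
      push_neg at hcon
      have hm := hAmono.monotone (show N x' + 1 ≤ N x by omega)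
      have := (hN x hx).1
      have := (hN x' hx').2
      linarith
    rcases eq_or_lt_of_le hNle with heq | hltN
    · rw [h1.1, h2.1, ← heq]
      exact (EG ^ (N x)).strictMono (hψm ((EF ^ (-(N x))).strictMono hlt))
    · calc h x < B (N x + 1) := h1.2.2
        _ ≤ B (N x') := hBmono.monotone (by omega)
        _ ≤ h x' := h2.2.1
  have himg : h '' Set.Iio c = Set.Iio d := by
    apply Set.Subset.antisymm
    · rintro _ ⟨x, hx, rfl⟩
      exact lt_trans (hval hx).2.2 (hBd _)
    · intro y hy
      obtain ⟨m, ⟨hm1, hm2⟩, _⟩ := cover_exists' EG hEGd hG hy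
      have hcoG := coord_mem' EG hm1 hm2
      rw [hEGa] at hcoG
      set t := φ ((EG ^ (-m)) y) with htdef
      have ht1 : c - 1 ≤ t := by
        have := hφm.monotone hcoG.1
        rwa [hφa] at this
      have ht2 : t < F (c - 1) := by
        have := hφm hcoG.2
        rwa [hφb] at this
      set x := (EF ^ m) t with hxdef
      have hx1 : A m ≤ x := (EF ^ m).monotone ht1
      have hx2 : x < A (m + 1) := by
        have h2 := (EF ^ m).strictMono ht2
        have h3 : (EF ^ m) (F (c - 1)) = A (m + 1) := (zpow_apply_succ' EF m _).symm
        rwa [h3] at h2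
      have hxc : x < c := lt_trans hx2 (hAc _)
      have hNx : N x = m := huniq hxc hx1 hx2
      refine ⟨x, hxc, ?_⟩
      rw [(hval hxc).1, hNx, hxdef, zpow_neg_cancel', htdef, hψφ, zpow_cancel']
  have hconj : ∀ x < c, h (F x) = G (h x) := by
    intro x hx
    have hFx : F x < c := by
      have := hFm hx
      rwa [hc] at this
    have hNx := hN x hx
    have h1 : A (N x + 1) ≤ F x := by
      rw [hAstep]; exact hFm.monotone hNx.1
    have h2 : F x < A (N x + 1 + 1) := by
      rw [hAstep]; exact hFm hNx.2
    have hNF : N (F x) = N x + 1 := huniq hFx h1 h2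
    rw [(hval hFx).1, hNF, (hval hx).1]
    have harg : (EF ^ (-(N x + 1))) (F x) = (EF ^ (-(N x))) x := by
      have hfe : F x = (EF ^ (1 : ℤ)) x := by rw [zpow_one]; rfl
      rw [hfe, ← zpow_apply_add', show -(N x + 1) + 1 = -(N x) by ring]
    rw [harg, zpow_succ_apply']
    rfl
  exact ⟨h, hmonoOn, himg, hconj⟩

private lemma half_conj_right (F G : ℝ → ℝ) (c d : ℝ)
    (hFm : StrictMono F) (hFb : Function.Bijective F)
    (hGm : StrictMono G) (hGb : Function.Bijective G)
    (hc : F c = c) (hd : G d = d)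
    (hF : ∀ x > c, F x < x) (hG : ∀ y > d, G y < y) :
    ∃ h : ℝ → ℝ, StrictMonoOn h (Set.Ioi c) ∧ h '' Set.Ioi c = Set.Ioi d ∧
      ∀ x > c, h (F x) = G (h x) := by
  have hnegbij : Function.Bijective (fun x : ℝ => -x) := (Equiv.neg ℝ).bijective
  obtain ⟨h0, hm, him, hcj⟩ := half_conj (fun x => -F (-x)) (fun y => -G (-y)) (-c) (-d)
    (fun s t hst => by simp only [neg_lt_neg_iff]; exact hFm (by linarith))
    (by
      have : (fun x : ℝ => -F (-x)) = (fun x : ℝ => -x) ∘ F ∘ (fun x : ℝ => -x) := rfl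
      rw [this]
      exact hnegbij.comp (hFb.comp hnegbij))
    (fun s t hst => by simp only [neg_lt_neg_iff]; exact hGm (by linarith))
    (by
      have : (fun y : ℝ => -G (-y)) = (fun x : ℝ => -x) ∘ G ∘ (fun x : ℝ => -x) := rfl
      rw [this]
      exact hnegbij.comp (hGb.comp hnegbij))
    (by simp [hc]) (by simp [hd])
    (fun x hx => by
      have h1 : F (-x) < -x := hF (-x) (by linarith)
      show x < -F (-x)
      linarith)
    (fun y hy => by
      have h1 : G (-y) < -y := hG (-y) (by linarith)
      show y < -G (-y)
      linarith)
  refine ⟨fun x => -h0 (-x), ?_, ?_, ?_⟩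
  · intro x hx x' hx' hlt
    have : -x' < -x := by linarith
    have h1 := hm (show -x' ∈ Set.Iio (-c) by simp only [Set.mem_Iio]; simp only [Set.mem_Ioi] at hx'; linarith)
      (show -x ∈ Set.Iio (-c) by simp only [Set.mem_Iio]; simp only [Set.mem_Ioi] at hx; linarith) this
    simp only [neg_lt_neg_iff]
    exact h1
  · ext y
    simp only [Set.mem_image, Set.mem_Ioi]
    constructor
    · rintro ⟨x, hx, rfl⟩
      have : h0 (-x) ∈ Set.Iio (-d) := by
        rw [← him]
        exact ⟨-x, by simp only [Set.mem_Iio]; linarith, rfl⟩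
      simp only [Set.mem_Iio] at this
      linarith
    · intro hy
      have : -y ∈ Set.Iio (-d) := by simp only [Set.mem_Iio]; linarith
      rw [← him] at this
      obtain ⟨u, hu, huy⟩ := this
      simp only [Set.mem_Iio] at hu
      exact ⟨-u, by linarith, by rw [neg_neg, huy, neg_neg]⟩
  · intro x hx
    have hx' : -x < -c := by linarith
    have := hcj (-x) hx'
    rw [neg_neg] at this
    show -h0 (-F x) = G (-h0 (-x))
    rw [this, neg_neg]

private lemma pos_of_sign_eq_one {t : ℝ} (h : Real.sign t = 1) : 0 < t := by
  rcases lt_trichotomy t 0 with h' | h' | h'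
  · rw [Real.sign_of_neg h'] at h; norm_num at h
  · rw [h', Real.sign_zero] at h; norm_num at h
  · exact h'

private lemma neg_of_sign_eq_neg_one {t : ℝ} (h : Real.sign t = -1) : t < 0 := by
  rcases lt_trichotomy t 0 with h' | h' | h'
  · exact h'
  · rw [h', Real.sign_zero] at h; norm_num at h
  · rw [Real.sign_of_pos h'] at h; norm_num at h

theorem conjugacy_one_fixed_point
    (f g : ℝ → ℝ) (x₁ y₁ : ℝ)
    (hfmono : StrictMono f) (hfcont : Continuous f) (hfbij : Function.Bijective f)
    (hgmono : StrictMono g) (hgcont : Continuous g) (hgbij : Function.Bijective g)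
    (hx₁ : f x₁ = x₁) (hy₁ : g y₁ = y₁)
    (hfunique : ∀ x : ℝ, f x = x → x = x₁)
    (hgunique : ∀ y : ℝ, g y = y → y = y₁)
    (hleft : ∀ x < x₁, ∀ y < y₁, Real.sign (f x - x) = Real.sign (g y - y))
    (hright : ∀ x > x₁, ∀ y > y₁, Real.sign (f x - x) = Real.sign (g y - y)) :
    ∃ h : ℝ → ℝ, StrictMono h ∧ Continuous h ∧ Function.Bijective h ∧
      h ∘ f = g ∘ h := by
  classical
  -- inverses
  set Ef : ℝ ≃o ℝ := hfmono.orderIsoOfSurjective f hfbij.2 with hEf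
  set Eg : ℝ ≃o ℝ := hgmono.orderIsoOfSurjective g hgbij.2 with hEg
  have hEfa : ∀ x, Ef x = f x := fun _ => rfl
  have hEga : ∀ x, Eg x = g x := fun _ => rfl
  have hfi : ∀ x, Ef.symm (f x) = x := fun x => Ef.symm_apply_apply x
  have hgi : ∀ x, g (Eg.symm x) = x := fun x => Eg.apply_symm_apply x
  have hfi' : ∀ x, f (Ef.symm x) = x := fun x => Ef.apply_symm_apply x
  have hfix : Ef.symm x₁ = x₁ := by
    have h1 : Ef x₁ = x₁ := hx₁
    conv_lhs => rw [← h1]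
    exact Ef.symm_apply_apply x₁
  have hgiy : Eg.symm y₁ = y₁ := by
    have h1 : Eg y₁ = y₁ := hy₁
    conv_lhs => rw [← h1]
    exact Eg.symm_apply_apply y₁
  -- nonvanishing of f x - x off x₁
  have hfne : ∀ x, x ≠ x₁ → f x - x ≠ 0 := by
    intro x hx hcon
    exact hx (hfunique x (by linarith))
  have hgne : ∀ y, y ≠ y₁ → g y - y ≠ 0 := by
    intro y hy hcon
    exact hy (hgunique y (by linarith))
  -- LEFT side
  have hLdata : ∃ hL : ℝ → ℝ, StrictMonoOn hL (Set.Iio x₁) ∧ hL '' Set.Iio x₁ = Set.Iio y₁ ∧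
      ∀ x < x₁, hL (f x) = g (hL x) := by
    have ha : x₁ - 1 < x₁ := by linarith
    rcases (Real.sign_apply_eq_of_ne_zero _ (hfne (x₁ - 1) (by linarith))) with hs | hs
    · -- f x < x on the left
      have hfl : ∀ x < x₁, f x < x := by
        intro x hx
        have h1 : Real.sign (f x - x) = Real.sign (g (y₁ - 1) - (y₁ - 1)) :=
          hleft x hx (y₁ - 1) (by linarith)
        have h2 : Real.sign (f (x₁ - 1) - (x₁ - 1)) = Real.sign (g (y₁ - 1) - (y₁ - 1)) :=
          hleft (x₁ - 1) ha (y₁ - 1) (by linarith)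
        have := neg_of_sign_eq_neg_one (t := f x - x) (by rw [h1, ← h2, hs])
        linarith
      have hgl : ∀ y < y₁, g y < y := by
        intro y hy
        have h1 : Real.sign (f (x₁ - 1) - (x₁ - 1)) = Real.sign (g y - y) :=
          hleft (x₁ - 1) ha y hy
        have := neg_of_sign_eq_neg_one (t := g y - y) (by rw [← h1, hs])
        linarith
      obtain ⟨h0, hm, him, hcj⟩ := half_conj (Ef.symm) (Eg.symm) x₁ y₁
        Ef.symm.strictMono (Ef.symm.toEquiv.bijective)
        Eg.symm.strictMono (Eg.symm.toEquiv.bijective)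
        hfix hgiy
        (fun x hx => by
          have h1 : f x < x := hfl x hx
          have := Ef.symm.strictMono h1
          rwa [hfi] at this)
        (fun y hy => by
          have h1 : g y < y := hgl y hy
          have h2 := Eg.symm.strictMono h1
          rwa [show Eg.symm (g y) = y from Eg.symm_apply_apply y] at h2)
      refine ⟨h0, hm, him, ?_⟩
      intro x hx
      have hfxlt : f x < x₁ := by
        have := hfmono hx
        rwa [hx₁] at this
      have := hcj (f x) hfxlt
      rw [hfi] at this
      rw [this, hgi]
    · -- f x > x on the left
      have hfl : ∀ x < x₁, x < f x := by
        intro x hx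
        have h1 : Real.sign (f x - x) = Real.sign (g (y₁ - 1) - (y₁ - 1)) :=
          hleft x hx (y₁ - 1) (by linarith)
        have h2 : Real.sign (f (x₁ - 1) - (x₁ - 1)) = Real.sign (g (y₁ - 1) - (y₁ - 1)) :=
          hleft (x₁ - 1) ha (y₁ - 1) (by linarith)
        have := pos_of_sign_eq_one (t := f x - x) (by rw [h1, ← h2, hs])
        linarith
      have hgl : ∀ y < y₁, y < g y := by
        intro y hy
        have h1 : Real.sign (f (x₁ - 1) - (x₁ - 1)) = Real.sign (g y - y) :=
          hleft (x₁ - 1) ha y hy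
        have := pos_of_sign_eq_one (t := g y - y) (by rw [← h1, hs])
        linarith
      exact half_conj f g x₁ y₁ hfmono hfbij hgmono hgbij hx₁ hy₁ hfl hgl
  -- RIGHT side
  have hRdata : ∃ hR : ℝ → ℝ, StrictMonoOn hR (Set.Ioi x₁) ∧ hR '' Set.Ioi x₁ = Set.Ioi y₁ ∧
      ∀ x > x₁, hR (f x) = g (hR x) := by
    have ha : x₁ + 1 > x₁ := by linarith
    rcases (Real.sign_apply_eq_of_ne_zero _ (hfne (x₁ + 1) (by linarith))) with hs | hs
    · -- f x < x on the right : direct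
      have hfl : ∀ x > x₁, f x < x := by
        intro x hx
        have h1 : Real.sign (f x - x) = Real.sign (g (y₁ + 1) - (y₁ + 1)) :=
          hright x hx (y₁ + 1) (by linarith)
        have h2 : Real.sign (f (x₁ + 1) - (x₁ + 1)) = Real.sign (g (y₁ + 1) - (y₁ + 1)) :=
          hright (x₁ + 1) ha (y₁ + 1) (by linarith)
        have := neg_of_sign_eq_neg_one (t := f x - x) (by rw [h1, ← h2, hs])
        linarith
      have hgl : ∀ y > y₁, g y < y := by
        intro y hy
        have h1 : Real.sign (f (x₁ + 1) - (x₁ + 1)) = Real.sign (g y - y) :=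
          hright (x₁ + 1) ha y hy
        have := neg_of_sign_eq_neg_one (t := g y - y) (by rw [← h1, hs])
        linarith
      exact half_conj_right f g x₁ y₁ hfmono hfbij hgmono hgbij hx₁ hy₁ hfl hgl
    · -- f x > x on the right : use inverses
      have hfl : ∀ x > x₁, x < f x := by
        intro x hx
        have h1 : Real.sign (f x - x) = Real.sign (g (y₁ + 1) - (y₁ + 1)) :=
          hright x hx (y₁ + 1) (by linarith)
        have h2 : Real.sign (f (x₁ + 1) - (x₁ + 1)) = Real.sign (g (y₁ + 1) - (y₁ + 1)) :=
          hright (x₁ + 1) ha (y₁ + 1) (by linarith)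
        have := pos_of_sign_eq_one (t := f x - x) (by rw [h1, ← h2, hs])
        linarith
      have hgl : ∀ y > y₁, y < g y := by
        intro y hy
        have h1 : Real.sign (f (x₁ + 1) - (x₁ + 1)) = Real.sign (g y - y) :=
          hright (x₁ + 1) ha y hy
        have := pos_of_sign_eq_one (t := g y - y) (by rw [← h1, hs])
        linarith
      obtain ⟨h0, hm, him, hcj⟩ := half_conj_right (Ef.symm) (Eg.symm) x₁ y₁
        Ef.symm.strictMono (Ef.symm.toEquiv.bijective)
        Eg.symm.strictMono (Eg.symm.toEquiv.bijective)
        hfix hgiy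
        (fun x hx => by
          have h1 : x < f x := hfl x hx
          have := Ef.symm.strictMono h1
          rwa [hfi] at this)
        (fun y hy => by
          have h1 : y < g y := hgl y hy
          have h2 := Eg.symm.strictMono h1
          rwa [show Eg.symm (g y) = y from Eg.symm_apply_apply y] at h2)
      refine ⟨h0, hm, him, ?_⟩
      intro x hx
      have hfxgt : f x > x₁ := by
        have := hfmono hx
        rwa [hx₁] at this
      have := hcj (f x) hfxgt
      rw [hfi] at this
      rw [this, hgi]
  obtain ⟨hL, hLm, hLim, hLcj⟩ := hLdata
  obtain ⟨hR, hRm, hRim, hRcj⟩ := hRdata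
  have hLlt : ∀ x < x₁, hL x < y₁ := by
    intro x hx
    have : hL x ∈ Set.Iio y₁ := hLim ▸ ⟨x, hx, rfl⟩
    simpa using this
  have hRgt : ∀ x > x₁, y₁ < hR x := by
    intro x hx
    have : hR x ∈ Set.Ioi y₁ := hRim ▸ ⟨x, hx, rfl⟩
    simpa using this
  set h : ℝ → ℝ := fun x => if x < x₁ then hL x else if x = x₁ then y₁ else hR x with hhdef
  have hvlt : ∀ x < x₁, h x = hL x := fun x hx => if_pos hx
  have hveq : h x₁ = y₁ := by
    show (if x₁ < x₁ then hL x₁ else if x₁ = x₁ then y₁ else hR x₁) = y₁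
    rw [if_neg (lt_irrefl x₁), if_pos rfl]
  have hvgt : ∀ x > x₁, h x = hR x := fun x hx => by
    show (if x < x₁ then hL x else if x = x₁ then y₁ else hR x) = hR x
    rw [if_neg (by linarith), if_neg (by linarith)]
  have hmono : StrictMono h := by
    intro x x' hlt
    rcases lt_trichotomy x x₁ with hx | hx | hx
    · rw [hvlt x hx]
      rcases lt_trichotomy x' x₁ with hx' | hx' | hx'
      · rw [hvlt x' hx']
        exact hLm hx hx' hlt
      · rw [hx', hveq]
        exact hLlt x hx
      · rw [hvgt x' hx']
        exact lt_trans (hLlt x hx) (hRgt x' hx')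
    · subst hx
      rw [hveq, hvgt x' hlt]
      exact hRgt x' hlt
    · rw [hvgt x hx, hvgt x' (lt_trans hx hlt)]
      exact hRm hx (lt_trans hx hlt) hlt
  have hsurj : Function.Surjective h := by
    intro y
    rcases lt_trichotomy y y₁ with hy | hy | hy
    · have : y ∈ Set.Iio y₁ := hy
      rw [← hLim] at this
      obtain ⟨x, hx, hxy⟩ := this
      exact ⟨x, by rw [hvlt x hx]; exact hxy⟩
    · exact ⟨x₁, by rw [hveq, hy]⟩
    · have : y ∈ Set.Ioi y₁ := hy
      rw [← hRim] at this
      obtain ⟨x, hx, hxy⟩ := this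
      exact ⟨x, by rw [hvgt x hx]; exact hxy⟩
  have hbij : Function.Bijective h := ⟨hmono.injective, hsurj⟩
  have hcont : Continuous h := (hmono.orderIsoOfSurjective h hsurj).continuous
  refine ⟨h, hmono, hcont, hbij, ?_⟩
  funext x
  simp only [Function.comp_apply]
  rcases lt_trichotomy x x₁ with hx | hx | hx
  · have hfx : f x < x₁ := by
      have := hfmono hx
      rwa [hx₁] at this
    rw [hvlt _ hfx, hvlt _ hx]
    exact hLcj x hx
  · subst hx
    rw [hx₁, hveq, hy₁]
  · have hfx : x₁ < f x := by
      have := hfmono hx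
      rwa [hx₁] at this
    rw [hvgt _ hfx, hvgt _ hx]
    exact hRcj x hx
end

section
/- Suppose f : ℝ × ℝ → ℝ is C^r with r ≥ 2, f(0,μ) = 0 for all μ, f_x(0,0) = 1, f_{x μ}(0,0) ≠ 0 and f_{xx}(0,0) ≠ 0. Then there exist ε > 0 and a C^{r−1} function x : (−ε, ε) → ℝ with x(0) = 0 and x'(0) = −2 f_{x μ}(0,0)/f_{xx}(0,0), such that for each μ, x(μ) is a fixed point of f(·, μ), i.e. f(x(μ), μ) = x(μ), and x(μ) ≠ 0 for μ ≠ 0. -/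
set_option synthInstance.maxHeartbeats 1000000
set_option maxHeartbeats 1000000

open Set MeasureTheory intervalIntegral Metric Filter Topology

lemma contDiff_param_integral (n : ℕ) {E : Type} [NormedAddCommGroup E]
    [NormedSpace ℝ E] [CompleteSpace E] (K : (ℝ × ℝ) × ℝ → E)
    (hK : ContDiff ℝ n K) :
    ContDiff ℝ n (fun p : ℝ × ℝ => ∫ t in (0:ℝ)..1, K (p, t)) := by
  induction n generalizing E with
  | zero =>
    rw [show ((0:ℕ) : WithTop ℕ∞) = 0 from rfl, contDiff_zero] at hK ⊢
    exact intervalIntegral.continuous_parametric_intervalIntegral_of_continuous'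
      (f := fun p t => K (p, t)) hK 0 1
  | succ n IH =>
    set K' : (ℝ × ℝ) × ℝ → ((ℝ × ℝ) →L[ℝ] E) :=
      fun q => (fderiv ℝ K q).comp (ContinuousLinearMap.inl ℝ (ℝ × ℝ) ℝ) with hK'def
    have hKd : Differentiable ℝ K := hK.differentiable (by exact_mod_cast Nat.succ_ne_zero n)
    have hK' : ContDiff ℝ n K' := by
      have h1 : ContDiff ℝ n (fderiv ℝ K) := hK.fderiv_right (by exact_mod_cast le_refl (n+1))
      exact h1.clm_comp contDiff_const
    have hK'c : Continuous K' := hK'.continuous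
    have key : ∀ p₀ : ℝ × ℝ, HasFDerivAt (fun p => ∫ t in (0:ℝ)..1, K (p, t))
        (∫ t in (0:ℝ)..1, K' (p₀, t)) p₀ := by
      intro p₀
      obtain ⟨C, hC⟩ := ((isCompact_closedBall p₀ 1).prod (isCompact_Icc (a := (0:ℝ)) (b := 1))).exists_bound_of_continuousOn hK'c.continuousOn
      have hdiff : ∀ (t : ℝ) (x : ℝ × ℝ), HasFDerivAt (fun p => K (p, t)) (K' (x, t)) x := by
        intro t x
        exact (hKd (x, t)).hasFDerivAt.comp x (hasFDerivAt_prodMk_left x t)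
      exact (intervalIntegral.hasFDerivAt_integral_of_dominated_of_fderiv_le
        (F := fun p t => K (p, t)) (F' := fun p t => K' (p, t)) (bound := fun _ => C)
        (ball_mem_nhds p₀ one_pos)
        (Eventually.of_forall fun x => (hK.continuous.comp (Continuous.prodMk_right x)).aestronglyMeasurable)
        ((hK.continuous.comp (continuous_const.prodMk continuous_id)).intervalIntegrable 0 1)
        (hK'c.comp (continuous_const.prodMk continuous_id)).aestronglyMeasurable
        (ae_of_all _ fun t ht x hx => hC (x, t)
          ⟨ball_subset_closedBall hx, Ioc_subset_Icc_self (by simpa using ht)⟩)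
        intervalIntegrable_const
        (ae_of_all _ fun t _ x _ => hdiff t x))
    rw [show ((n + 1 : ℕ) : WithTop ℕ∞) = (n : WithTop ℕ∞) + 1 by norm_cast]
    refine contDiff_succ_iff_fderiv.2 ⟨fun p => (key p).differentiableAt, ?_, ?_⟩
    · intro h; exact absurd h (by simp)
    · have : fderiv ℝ (fun p => ∫ t in (0:ℝ)..1, K (p, t)) =
          fun p => ∫ t in (0:ℝ)..1, K' (p, t) := funext fun p => (key p).fderiv
      rw [this]
      exact IH K' hK'

/-- the shear equivalence (x, μ) ↦ (a x + b μ, μ) for a ≠ 0 -/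
noncomputable def shearEquiv (a b : ℝ) (ha : a ≠ 0) : (ℝ × ℝ) ≃L[ℝ] (ℝ × ℝ) :=
  (LinearEquiv.ofLinear
    (LinearMap.prod (a • LinearMap.fst ℝ ℝ ℝ + b • LinearMap.snd ℝ ℝ ℝ) (LinearMap.snd ℝ ℝ ℝ))
    (LinearMap.prod (a⁻¹ • LinearMap.fst ℝ ℝ ℝ - (b/a) • LinearMap.snd ℝ ℝ ℝ) (LinearMap.snd ℝ ℝ ℝ))
    (by ext ⟨x, y⟩ <;> simp <;> field_simp <;> ring
    )
    (by ext ⟨x, y⟩ <;> simp <;> field_simp <;> ring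
    )).toContinuousLinearEquiv

lemma shearEquiv_apply (a b : ℝ) (ha : a ≠ 0) (v : ℝ × ℝ) :
    shearEquiv a b ha v = (a * v.1 + b * v.2, v.2) := rfl

theorem transcritical_skeleton
    (f : ℝ × ℝ → ℝ) (r : ℕ) (hr : 2 ≤ r)
    (hsmooth : ContDiff ℝ r f)
    (hfix : ∀ μ : ℝ, f (0, μ) = 0)
    (hfx : deriv (fun x => f (x, 0)) 0 = 1)
    (hfxμ : deriv (fun μ => deriv (fun x => f (x, μ)) 0) 0 ≠ 0)
    (hfxx : iteratedDeriv 2 (fun x => f (x, 0)) 0 ≠ 0) :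
    ∃ ε > 0, ∃ x : ℝ → ℝ,
      ContDiffOn ℝ (r - 1) x (Ioo (-ε) ε) ∧
      x 0 = 0 ∧
      deriv x 0 = -2 * deriv (fun μ => deriv (fun x => f (x, μ)) 0) 0
        / iteratedDeriv 2 (fun x => f (x, 0)) 0 ∧
      ∀ μ ∈ Ioo (-ε) ε, f (x μ, μ) = x μ ∧ (μ ≠ 0 → x μ ≠ 0) := by
  have hr1 : ((r - 1 : ℕ) : WithTop ℕ∞) ≠ 0 := by
    exact_mod_cast (by omega : r - 1 ≠ 0)
  -- the partial derivative g = ∂₁ f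
  set g : ℝ × ℝ → ℝ := fun p => fderiv ℝ f p (1, 0) with hgdef
  have hgsmooth : ContDiff ℝ (r - 1 : ℕ) g := by
    have h1 : ContDiff ℝ (r - 1 : ℕ) (fderiv ℝ f) := by
      apply hsmooth.fderiv_right
      have : ((r - 1 : ℕ) : WithTop ℕ∞) + 1 = ((r - 1 + 1 : ℕ) : WithTop ℕ∞) := by norm_cast
      rw [this]
      exact_mod_cast Nat.le_of_eq (by omega)
    exact h1.clm_apply contDiff_const
  have hgc : Continuous g := hgsmooth.continuous
  have hpd : ∀ (a μ : ℝ), HasDerivAt (fun x => f (x, μ)) (g (a, μ)) a := by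
    intro a μ
    have h1 : HasFDerivAt f (fderiv ℝ f (a, μ)) (a, μ) :=
      (hsmooth.differentiable (by exact_mod_cast (by omega : r ≠ 0)) (a, μ)).hasFDerivAt
    have h2 : HasDerivAt (fun x : ℝ => (x, μ)) ((1 : ℝ), (0 : ℝ)) a :=
      (hasDerivAt_id a).prodMk (hasDerivAt_const a μ)
    exact h1.comp_hasDerivAt a h2
  -- the quotient h with f (x, μ) = x * h (x, μ)
  set h : ℝ × ℝ → ℝ := fun p => ∫ t in (0:ℝ)..1, g (t * p.1, p.2) with hhdef
  have hhsmooth : ContDiff ℝ (r - 1 : ℕ) h := by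
    apply contDiff_param_integral (r - 1) (fun q : (ℝ × ℝ) × ℝ => g (q.2 * q.1.1, q.1.2))
    exact hgsmooth.comp (((contDiff_snd.mul contDiff_fst.fst)).prodMk contDiff_fst.snd)
  have hfh : ∀ p : ℝ × ℝ, f p = p.1 * h p := by
    rintro ⟨x, μ⟩
    rcases eq_or_ne x 0 with rfl | hx
    · simpa using hfix μ
    · have hFTC : ∫ s in (0:ℝ)..x, g (s, μ) = f (x, μ) - f (0, μ) := by
        apply intervalIntegral.integral_eq_sub_of_hasDerivAt
          (f := fun y => f (y, μ)) (f' := fun s => g (s, μ)) (a := 0) (b := x)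
          (fun s _ => hpd s μ)
        exact (hgc.comp (continuous_id.prodMk continuous_const)).intervalIntegrable 0 x
      have hsub : ∫ t in (0:ℝ)..1, g (t * x, μ) = x⁻¹ • ∫ s in (0:ℝ)..x, g (s, μ) := by
        have := intervalIntegral.integral_comp_mul_right (a := (0:ℝ)) (b := 1)
          (fun s => g (s, μ)) hx
        simpa using this
      have hx1 : h (x, μ) = x⁻¹ * f (x, μ) := by
        simp only [hhdef]
        rw [hsub, hFTC, hfix μ, sub_zero, smul_eq_mul]
      show f (x, μ) = x * h (x, μ)
      rw [hx1]
      field_simp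
  have hh0 : ∀ μ : ℝ, h (0, μ) = g (0, μ) := by
    intro μ
    simp [hhdef]
  -- the constants
  set b := deriv (fun μ => g (0, μ)) 0 with hbdef
  set c := deriv (fun x => g (x, 0)) 0 with hcdef
  have hgd : Differentiable ℝ g := hgsmooth.differentiable hr1
  have hb : HasDerivAt (fun μ => g (0, μ)) b 0 := by
    have h1 : HasDerivAt (fun μ : ℝ => ((0:ℝ), μ)) ((0:ℝ), (1:ℝ)) 0 :=
      (hasDerivAt_const 0 (0:ℝ)).prodMk (hasDerivAt_id 0)
    have := (hgd (0, 0)).hasFDerivAt.comp_hasDerivAt_of_eq 0 h1 rfl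
    exact this.differentiableAt.hasDerivAt
  have hc : HasDerivAt (fun x => g (x, 0)) c 0 := by
    have h1 : HasDerivAt (fun x : ℝ => (x, (0:ℝ))) ((1:ℝ), (0:ℝ)) 0 :=
      (hasDerivAt_id 0).prodMk (hasDerivAt_const 0 (0:ℝ))
    have := (hgd (0, 0)).hasFDerivAt.comp_hasDerivAt_of_eq 0 h1 rfl
    exact this.differentiableAt.hasDerivAt
  have hgf : ∀ a μ : ℝ, deriv (fun x => f (x, μ)) a = g (a, μ) := fun a μ => (hpd a μ).deriv
  have hg00 : g (0, 0) = 1 := by rw [← hgf 0 0]; exact hfx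
  have hbne : b ≠ 0 := by
    have : (fun μ : ℝ => deriv (fun x => f (x, μ)) 0) = fun μ => g (0, μ) :=
      funext fun μ => hgf 0 μ
    rwa [this] at hfxμ
  have hiter : iteratedDeriv 2 (fun x => f (x, 0)) 0 = c := by
    rw [show (2 : ℕ) = 1 + 1 from rfl, iteratedDeriv_succ, iteratedDeriv_one]
    have : deriv (fun x => f (x, 0)) = fun a => g (a, 0) := funext fun a => hgf a 0
    rw [this]
  have hcne : c ≠ 0 := by rwa [hiter] at hfxx
  -- h_x(0,0) = c / 2 via L'Hôpital
  have h00 : h (0, 0) = 1 := by rw [hh0 0, hg00]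
  have hx_half : HasDerivAt (fun x => h (x, 0)) (c / 2) 0 := by
    rw [hasDerivAt_iff_tendsto_slope]
    have hslope_eq : ∀ᶠ x in 𝓝[≠] (0:ℝ),
        (fun x => (f (x, 0) - x) / x ^ 2) x = slope (fun x => h (x, 0)) 0 x := by
      filter_upwards [self_mem_nhdsWithin] with x hx
      have hx0 : x ≠ 0 := hx
      have hfhx : f (x, 0) = x * h (x, 0) := by simpa using hfh (x, 0)
      rw [slope_def_field, h00, hfhx]
      field_simp
      ring
    have hlh : Filter.Tendsto (fun x => (f (x, 0) - x) / x ^ 2) (𝓝[≠] (0:ℝ)) (𝓝 (c / 2)) := by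
      apply HasDerivAt.lhopital_zero_nhdsNE (f' := fun x => g (x, 0) - 1) (g' := fun x => 2 * x)
      · exact Filter.Eventually.of_forall fun x => ((hpd x 0).sub (hasDerivAt_id x))
      · exact Filter.Eventually.of_forall fun x => by simpa using (hasDerivAt_pow 2 x)
      · filter_upwards [self_mem_nhdsWithin] with x hx
        exact mul_ne_zero two_ne_zero hx
      · have : Filter.Tendsto (fun x => f (x, 0) - x) (𝓝 (0:ℝ)) (𝓝 (f (0, 0) - 0)) :=
          ((hsmooth.continuous.comp (continuous_id.prodMk continuous_const)).sub
            continuous_id).tendsto 0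
        rw [hfix 0] at this
        simpa using this.mono_left nhdsWithin_le_nhds
      · have : Filter.Tendsto (fun x : ℝ => x ^ 2) (𝓝 (0:ℝ)) (𝓝 ((0:ℝ) ^ 2)) :=
          (continuous_pow 2).tendsto 0
        simpa using this.mono_left nhdsWithin_le_nhds
      · have h1 := hasDerivAt_iff_tendsto_slope.1 hc
        have h2 := h1.div_const 2
        apply h2.congr'
        filter_upwards [self_mem_nhdsWithin] with x hx
        rw [slope_def_field, hg00]
        rw [div_div, sub_zero, mul_comm]
    exact hlh.congr' hslope_eq
  -- the full derivative of h at the origin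
  have hhd : DifferentiableAt ℝ h (0, 0) := (hhsmooth.differentiable hr1) (0, 0)
  set L := fderiv ℝ h (0, 0) with hLdef
  have hLh : HasFDerivAt h L (0, 0) := hhd.hasFDerivAt
  have hL1 : L (1, 0) = c / 2 := by
    have h1 : HasDerivAt (fun x : ℝ => (x, (0:ℝ))) ((1:ℝ), (0:ℝ)) 0 :=
      (hasDerivAt_id 0).prodMk (hasDerivAt_const 0 (0:ℝ))
    have h2 := hLh.comp_hasDerivAt_of_eq 0 h1 rfl
    exact h2.unique hx_half
  have hL2 : L (0, 1) = b := by
    have h1 : HasDerivAt (fun μ : ℝ => ((0:ℝ), μ)) ((0:ℝ), (1:ℝ)) 0 :=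
      (hasDerivAt_const 0 (0:ℝ)).prodMk (hasDerivAt_id 0)
    have h2 := hLh.comp_hasDerivAt_of_eq 0 h1 rfl
    have h3 : HasDerivAt (fun μ : ℝ => h (0, μ)) b 0 :=
      hb.congr_of_eventuallyEq (Filter.Eventually.of_forall fun μ => hh0 μ)
    exact h2.unique h3
  have hLv : ∀ v : ℝ × ℝ, L v = c / 2 * v.1 + b * v.2 := by
    intro v
    have hv : v = v.1 • ((1:ℝ), (0:ℝ)) + v.2 • ((0:ℝ), (1:ℝ)) := by
      ext <;> simp
    rw [hv, map_add, L.map_smul, L.map_smul, hL1, hL2]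
    simp only [smul_eq_mul, Prod.fst_add, Prod.snd_add, Prod.smul_mk]
    simp
    ring
  -- the inverse function theorem
  have hc2 : c / 2 ≠ 0 := div_ne_zero hcne two_ne_zero
  set A := shearEquiv (c / 2) b hc2 with hAdef
  set Φ : ℝ × ℝ → ℝ × ℝ := fun p => (h p, p.2) with hΦdef
  have hΦs : ContDiffAt ℝ ((r - 1 : ℕ) : WithTop ℕ∞) Φ (0, 0) :=
    (hhsmooth.prodMk contDiff_snd).contDiffAt
  have hΦd : HasFDerivAt Φ (A : (ℝ × ℝ) →L[ℝ] ℝ × ℝ) (0, 0) := by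
    have h1 : HasFDerivAt Φ (L.prod (ContinuousLinearMap.snd ℝ ℝ ℝ)) (0, 0) :=
      hLh.prodMk ((ContinuousLinearMap.snd ℝ ℝ ℝ).hasFDerivAt)
    have h2 : (A : (ℝ × ℝ) →L[ℝ] ℝ × ℝ) = L.prod (ContinuousLinearMap.snd ℝ ℝ ℝ) := by
      apply ContinuousLinearMap.ext
      intro v
      have := shearEquiv_apply (c / 2) b hc2 v
      rw [ContinuousLinearEquiv.coe_coe, this]
      simp [ContinuousLinearMap.prod_apply, hLv v]
    rw [h2]
    exact h1
  set Ψ := hΦs.localInverse hΦd hr1 with hΨdef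
  have hΦ00 : Φ (0, 0) = (1, 0) := by
    simp only [hΦdef]
    rw [hh0 0, hg00]
  have hΨs : ContDiffAt ℝ ((r - 1 : ℕ) : WithTop ℕ∞) Ψ (1, 0) := by
    have := hΦs.to_localInverse hΦd hr1
    rwa [hΦ00] at this
  have hΨ0 : Ψ (1, 0) = (0, 0) := by
    have := hΦs.localInverse_apply_image hΦd hr1
    rwa [hΦ00] at this
  set X : ℝ → ℝ := fun μ => (Ψ (1, μ)).1 with hXdef
  have hXs : ContDiffAt ℝ ((r - 1 : ℕ) : WithTop ℕ∞) X 0 := by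
    have h1 : ContDiffAt ℝ ((r - 1 : ℕ) : WithTop ℕ∞) (fun μ : ℝ => Ψ (1, μ)) 0 := by
      apply hΨs.comp 0
      exact (contDiff_const.prodMk contDiff_id).contDiffAt
    exact (contDiff_fst.contDiffAt).comp 0 h1
  have hX0 : X 0 = 0 := by
    simp only [hXdef, hΨ0]
  -- eventual right inverse
  have hri : ∀ᶠ y in 𝓝 ((1:ℝ), (0:ℝ)), Φ (Ψ y) = y := by
    have h1 := (hΦs.hasStrictFDerivAt' hΦd hr1).eventually_right_inverse
    rw [hΦ00] at h1
    exact h1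
  have hri' : ∀ᶠ μ in 𝓝 (0:ℝ), Φ (Ψ (1, μ)) = (1, μ) := by
    have hcont : Filter.Tendsto (fun μ : ℝ => ((1:ℝ), μ)) (𝓝 0) (𝓝 ((1:ℝ), (0:ℝ))) :=
      ((continuous_const.prodMk continuous_id).tendsto 0)
    exact hcont.eventually hri
  have hkey : ∀ᶠ μ in 𝓝 (0:ℝ), h (X μ, μ) = 1 ∧ f (X μ, μ) = X μ := by
    filter_upwards [hri'] with μ hμ
    have h2 : (Ψ (1, μ)).2 = μ := congrArg Prod.snd hμ
    have h1 : Ψ (1, μ) = (X μ, μ) := Prod.ext rfl h2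
    have h3 : h (X μ, μ) = 1 := by
      have h4 : h (Ψ (1, μ)) = 1 := congrArg Prod.fst hμ
      rwa [h1] at h4
    refine ⟨h3, ?_⟩
    have h5 : f (X μ, μ) = X μ * h (X μ, μ) := by simpa using hfh (X μ, μ)
    rw [h5, h3, mul_one]
  -- the derivative of X at 0
  have hXd : DifferentiableAt ℝ X 0 := hXs.differentiableAt hr1
  have hcurve : HasDerivAt (fun μ => h (X μ, μ)) (L (deriv X 0, 1)) 0 := by
    have hmk : HasDerivAt (fun μ => (X μ, μ)) ((deriv X 0), (1:ℝ)) 0 :=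
      hXd.hasDerivAt.prodMk (hasDerivAt_id 0)
    exact hLh.comp_hasDerivAt_of_eq 0 hmk (by rw [hX0])
  have hconst : HasDerivAt (fun μ => h (X μ, μ)) 0 0 := by
    have heq : (fun μ => h (X μ, μ)) =ᶠ[𝓝 (0:ℝ)] (fun _ => 1) := by
      filter_upwards [hkey] with μ hμ
      exact hμ.1
    exact (hasDerivAt_const 0 (1:ℝ)).congr_of_eventuallyEq heq
  have hd0 : c / 2 * deriv X 0 + b * 1 = 0 := by
    rw [← hLv (deriv X 0, 1)]
    exact hcurve.unique hconst
  have hderivX : deriv X 0 = -2 * b / c := by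
    field_simp at hd0 ⊢
    linarith
  -- nonvanishing away from μ = 0
  have hne : ∀ᶠ μ in 𝓝[≠] (0:ℝ), g (0, μ) ≠ 1 := by
    have h1 := hasDerivAt_iff_tendsto_slope.1 hb
    have h2 : ∀ᶠ μ in 𝓝[≠] (0:ℝ), slope (fun μ => g (0, μ)) 0 μ ≠ 0 := h1.eventually_ne hbne
    filter_upwards [h2] with μ hμ
    intro hcon
    apply hμ
    rw [slope_def_field, hcon, hg00, sub_self, zero_div]
  have hne' : ∀ᶠ μ in 𝓝 (0:ℝ), μ ≠ 0 → g (0, μ) ≠ 1 := by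
    rw [eventually_nhdsWithin_iff] at hne
    filter_upwards [hne] with μ hμ hμ0
    exact hμ (by simpa using hμ0)
  -- choose ε
  obtain ⟨u, hu, hXcd⟩ := hXs.contDiffOn (le_refl _) (by intro hcon; exact absurd hcon (by simp))
  have hev : ∀ᶠ μ in 𝓝 (0:ℝ),
      ((h (X μ, μ) = 1 ∧ f (X μ, μ) = X μ) ∧ (μ ≠ 0 → g (0, μ) ≠ 1)) ∧ μ ∈ u := by
    filter_upwards [hkey, hne', hu] with μ h1 h2 h3
    exact ⟨⟨h1, h2⟩, h3⟩
  obtain ⟨ε, hε, hball⟩ := Metric.eventually_nhds_iff_ball.1 hev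
  have hIoo : Ioo (-ε) ε ⊆ Metric.ball (0:ℝ) ε := by
    rw [Real.ball_eq_Ioo]
    simp [subset_rfl]
  refine ⟨ε, hε, X, ?_, hX0, ?_, ?_⟩
  · exact (hXcd.mono fun μ hμ => (hball μ (hIoo hμ)).2)
  · rw [hderivX, hiter]
    have hbrw : deriv (fun μ => deriv (fun x => f (x, μ)) 0) 0 = b := by
      rw [hbdef]
      congr 1
      funext μ
      exact hgf 0 μ
    rw [hbrw]
  · intro μ hμ
    obtain ⟨⟨hh1, hf1⟩, hne1⟩ := (hball μ (hIoo hμ)).1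
    refine ⟨hf1, fun hμ0 hX0' => ?_⟩
    apply hne1 hμ0
    rw [← hh0 μ]
    rw [hX0'] at hh1
    exact hh1
end

section
/- Suppose f : ℝ × ℝ → ℝ is C^r, r ≥ 2, with f(0,0) = 0, f_x(0,0) = 1, f_μ(0,0) > 0 and f_{xx}(0,0) < 0. Then there is a neighbourhood N₀ of (0,0) in ℝ² such that f(·, μ) has no fixed points in N₀ for μ < 0, exactly one for μ = 0 (namely x = 0), and exactly two for small μ > 0. -/
open Set

private lemma slice_x_hasDerivAt (f : ℝ × ℝ → ℝ) (hf : Differentiable ℝ f) (x μ : ℝ) :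
    HasDerivAt (fun x => f (x, μ)) (fderiv ℝ f (x, μ) (1, 0)) x := by
  have h : HasDerivAt (fun x : ℝ => ((x, μ) : ℝ × ℝ)) ((1 : ℝ), (0 : ℝ)) x :=
    (hasDerivAt_id x).prodMk (hasDerivAt_const x μ)
  exact ((hf (x, μ)).hasFDerivAt).comp_hasDerivAt x h

private lemma slice_y_hasDerivAt (f : ℝ × ℝ → ℝ) (hf : Differentiable ℝ f) (x μ : ℝ) :
    HasDerivAt (fun μ => f (x, μ)) (fderiv ℝ f (x, μ) (0, 1)) μ := by
  have h : HasDerivAt (fun μ : ℝ => ((x, μ) : ℝ × ℝ)) ((0 : ℝ), (1 : ℝ)) μ :=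
    (hasDerivAt_const μ x).prodMk (hasDerivAt_id μ)
  exact ((hf (x, μ)).hasFDerivAt).comp_hasDerivAt μ h

theorem saddle_node_skeleton
    (f : ℝ × ℝ → ℝ) (r : ℕ) (hr : 2 ≤ r)
    (hsmooth : ContDiff ℝ r f)
    (hf0 : f (0, 0) = 0)
    (hfx : deriv (fun x => f (x, 0)) 0 = 1)
    (hfμ : deriv (fun μ => f (0, μ)) 0 > 0)
    (hfxx : iteratedDeriv 2 (fun x => f (x, 0)) 0 < 0) :
    ∃ δ > 0, ∃ μ₀ > 0,
      (∀ μ ∈ Ioo (-μ₀) (0 : ℝ), ∀ x ∈ Ioo (-δ) δ, f (x, μ) ≠ x) ∧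
      (∀ x ∈ Ioo (-δ) δ, f (x, 0) = x ↔ x = 0) ∧
      (∀ μ ∈ Ioo (0 : ℝ) μ₀, ∃ x₁ x₂,
        x₁ ∈ Ioo (-δ) δ ∧ x₂ ∈ Ioo (-δ) δ ∧ x₁ < x₂ ∧
        f (x₁, μ) = x₁ ∧ f (x₂, μ) = x₂ ∧
        ∀ x ∈ Ioo (-δ) δ, f (x, μ) = x → x = x₁ ∨ x = x₂) := by
  -- basic smoothness facts
  have hr2 : (2 : WithTop ℕ∞) ≤ (r : WithTop ℕ∞) := by exact_mod_cast hr
  have hr1 : (1 : WithTop ℕ∞) ≤ (r : WithTop ℕ∞) := le_trans (by norm_num) hr2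
  have hfd : Differentiable ℝ f := hsmooth.differentiable (lt_of_lt_of_le zero_lt_one hr1).ne'
  have hDf : ContDiff ℝ 1 (fderiv ℝ f) := hsmooth.fderiv_right (by exact_mod_cast hr)
  set f1 : ℝ × ℝ → ℝ := fun p => fderiv ℝ f p (1, 0) with hf1def
  set f2 : ℝ × ℝ → ℝ := fun p => fderiv ℝ f p (0, 1) with hf2def
  have hf1 : ContDiff ℝ 1 f1 :=
    (ContinuousLinearMap.apply ℝ ℝ ((1 : ℝ), (0 : ℝ))).contDiff.comp hDf
  have hf1d : Differentiable ℝ f1 := hf1.differentiable one_ne_zero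
  set f11 : ℝ × ℝ → ℝ := fun p => fderiv ℝ f1 p (1, 0) with hf11def
  have hc11 : Continuous f11 :=
    (ContinuousLinearMap.apply ℝ ℝ ((1 : ℝ), (0 : ℝ))).continuous.comp
      (hf1.continuous_fderiv one_ne_zero)
  have hc2 : Continuous f2 :=
    (ContinuousLinearMap.apply ℝ ℝ ((0 : ℝ), (1 : ℝ))).continuous.comp (hDf.continuous)
  -- slice derivatives
  have hx : ∀ x μ : ℝ, HasDerivAt (fun x => f (x, μ)) (f1 (x, μ)) x :=
    fun x μ => slice_x_hasDerivAt f hfd x μ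
  have hy : ∀ x μ : ℝ, HasDerivAt (fun μ => f (x, μ)) (f2 (x, μ)) μ :=
    fun x μ => slice_y_hasDerivAt f hfd x μ
  have hx1 : ∀ x μ : ℝ, HasDerivAt (fun x => f1 (x, μ)) (f11 (x, μ)) x :=
    fun x μ => slice_x_hasDerivAt f1 hf1d x μ
  -- translate hypotheses
  have e1 : f1 (0, 0) = 1 := by rw [← hfx]; exact ((hx 0 0).deriv).symm
  have e2 : 0 < f2 (0, 0) := by rw [← (hy 0 0).deriv]; exact hfμ
  have e11 : f11 (0, 0) < 0 := by
    have hd1 : deriv (fun x => f (x, 0)) = fun x => f1 (x, 0) :=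
      funext fun x => (hx x 0).deriv
    have h2 : iteratedDeriv 2 (fun x => f (x, 0)) = deriv (deriv (fun x => f (x, 0))) := by
      rw [iteratedDeriv_succ, iteratedDeriv_one]
    rw [h2, hd1] at hfxx
    rwa [(hx1 0 0).deriv] at hfxx
  -- choose δ : box on which f11 < 0 and f2 > 0
  have hopen : IsOpen {p : ℝ × ℝ | f11 p < 0 ∧ 0 < f2 p} :=
    (isOpen_lt hc11 continuous_const).inter (isOpen_lt continuous_const hc2)
  obtain ⟨ε, hε, hball⟩ := Metric.isOpen_iff.1 hopen ((0 : ℝ), (0 : ℝ)) ⟨e11, e2⟩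
  set δ : ℝ := ε / 2 with hδdef
  have hδ : 0 < δ := by positivity
  have hbox : ∀ x μ : ℝ, |x| ≤ δ → |μ| ≤ δ → f11 (x, μ) < 0 ∧ 0 < f2 (x, μ) := by
    intro x μ hxd hμd
    apply hball
    rw [Metric.mem_ball, Prod.dist_eq]
    simp only [Real.dist_eq, sub_zero]
    have : max |x| |μ| ≤ δ := max_le hxd hμd
    calc max |x| |μ| ≤ δ := this
      _ < ε := by rw [hδdef]; linarith
  have habs : ∀ x : ℝ, x ∈ Icc (-δ) δ → |x| ≤ δ := fun x hx => abs_le.2 ⟨hx.1, hx.2⟩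
  -- f1 (·, μ) strictly antitone on [-δ, δ]
  have hanti : ∀ μ : ℝ, |μ| ≤ δ → StrictAntiOn (fun x => f1 (x, μ)) (Icc (-δ) δ) := by
    intro μ hμ
    apply strictAntiOn_of_deriv_neg (convex_Icc _ _)
    · exact (hf1.continuous.comp (continuous_id.prodMk continuous_const)).continuousOn
    · intro x hxmem
      rw [interior_Icc] at hxmem
      rw [(hx1 x μ).deriv]
      exact (hbox x μ (le_of_lt (abs_lt.2 ⟨hxmem.1, hxmem.2⟩)) hμ).1
  -- G μ x = f (x, μ) - x
  set G : ℝ → ℝ → ℝ := fun μ x => f (x, μ) - x with hGdef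
  have hGd : ∀ μ x : ℝ, HasDerivAt (fun x => G μ x) (f1 (x, μ) - 1) x :=
    fun μ x => (hx x μ).sub (hasDerivAt_id x)
  have hGcont : ∀ μ : ℝ, Continuous (G μ) := by
    intro μ
    exact (hsmooth.continuous.comp (continuous_id.prodMk continuous_const)).sub continuous_id
  have hG00 : G 0 0 = 0 := by show f (0, 0) - 0 = 0; rw [hf0]; ring
  -- G 0 strictly negative away from 0
  have hmono0 : StrictMonoOn (G 0) (Icc (-δ) 0) := by
    apply strictMonoOn_of_deriv_pos (convex_Icc _ _) (hGcont 0).continuousOn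
    intro x hxmem
    rw [interior_Icc] at hxmem
    rw [(hGd 0 x).deriv]
    have h1x : f1 (0, 0) < f1 (x, 0) := by
      apply hanti 0 (by simp [le_of_lt hδ])
        (mem_Icc.2 ⟨hxmem.1.le, le_trans hxmem.2.le hδ.le⟩)
        (mem_Icc.2 ⟨by linarith, hδ.le⟩) hxmem.2
    rw [e1] at h1x; linarith
  have hanti0 : StrictAntiOn (G 0) (Icc 0 δ) := by
    apply strictAntiOn_of_deriv_neg (convex_Icc _ _) (hGcont 0).continuousOn
    intro x hxmem
    rw [interior_Icc] at hxmem
    rw [(hGd 0 x).deriv]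
    have h1x : f1 (x, 0) < f1 (0, 0) := by
      apply hanti 0 (by simp [le_of_lt hδ])
        (mem_Icc.2 ⟨by linarith, hδ.le⟩)
        (mem_Icc.2 ⟨by linarith [hxmem.1], hxmem.2.le⟩) hxmem.1
    rw [e1] at h1x; linarith
  have hneg : ∀ x : ℝ, x ∈ Icc (-δ) δ → x ≠ 0 → G 0 x < 0 := by
    intro x hxmem hx0
    rcases lt_or_gt_of_ne hx0 with h | h
    · have := hmono0 (mem_Icc.2 ⟨hxmem.1, h.le⟩) (mem_Icc.2 ⟨by linarith [hδ], le_rfl⟩) h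
      rwa [hG00] at this
    · have := hanti0 (mem_Icc.2 ⟨le_rfl, hδ.le⟩) (mem_Icc.2 ⟨h.le, hxmem.2⟩) h
      rwa [hG00] at this
  -- strict monotonicity in μ
  have hmonoμ : ∀ x : ℝ, |x| ≤ δ → StrictMonoOn (fun μ => G μ x) (Icc (-δ) δ) := by
    intro x hxd
    apply strictMonoOn_of_deriv_pos (convex_Icc _ _)
    · exact ((hsmooth.continuous.comp (continuous_const.prodMk continuous_id)).sub continuous_const).continuousOn
    · intro μ hμmem
      rw [interior_Icc] at hμmem
      have : HasDerivAt (fun μ => G μ x) (f2 (x, μ)) μ := (hy x μ).sub_const x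
      rw [this.deriv]
      exact (hbox x μ hxd (le_of_lt (abs_lt.2 ⟨hμmem.1, hμmem.2⟩))).2
  -- choose μ₀
  have hGδ0 : G 0 δ < 0 := hneg δ (mem_Icc.2 ⟨by linarith, le_rfl⟩) hδ.ne'
  have hGmδ0 : G 0 (-δ) < 0 := hneg (-δ) (mem_Icc.2 ⟨le_rfl, by linarith⟩) (by linarith)
  have hcφ : Continuous (fun μ => G μ δ) :=
    (hsmooth.continuous.comp (continuous_const.prodMk continuous_id)).sub continuous_const
  have hcψ : Continuous (fun μ => G μ (-δ)) :=
    (hsmooth.continuous.comp (continuous_const.prodMk continuous_id)).sub continuous_const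
  have hopen2 : IsOpen {μ : ℝ | G μ δ < 0 ∧ G μ (-δ) < 0} :=
    (isOpen_lt hcφ continuous_const).inter (isOpen_lt hcψ continuous_const)
  obtain ⟨ε', hε', hball'⟩ := Metric.isOpen_iff.1 hopen2 0 ⟨hGδ0, hGmδ0⟩
  set μ₀ : ℝ := min δ (ε' / 2) with hμ₀def
  have hμ₀ : 0 < μ₀ := lt_min hδ (by positivity)
  have hμ₀δ : μ₀ ≤ δ := min_le_left _ _
  have hμend : ∀ μ : ℝ, |μ| ≤ μ₀ → G μ δ < 0 ∧ G μ (-δ) < 0 := by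
    intro μ hμ
    apply hball'
    rw [Metric.mem_ball, Real.dist_eq, sub_zero]
    have : |μ| ≤ ε' / 2 := le_trans hμ (min_le_right _ _)
    linarith
  -- a Rolle-type lemma: no two solutions of f1 (·, μ) = 1
  have noTwo : ∀ μ : ℝ, |μ| ≤ δ → ∀ y₁ y₂ : ℝ, y₁ ∈ Icc (-δ) δ → y₂ ∈ Icc (-δ) δ →
      y₁ < y₂ → f1 (y₁, μ) = 1 → f1 (y₂, μ) = 1 → False := by
    intro μ hμ y₁ y₂ h₁ h₂ hlt e₁ e₂
    have h' : f1 (y₂, μ) < f1 (y₁, μ) := hanti μ hμ h₁ h₂ hlt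
    rw [e₁, e₂] at h'
    exact lt_irrefl 1 h'
  have rolle : ∀ μ : ℝ, ∀ z₁ z₂ : ℝ, z₁ < z₂ → G μ z₁ = 0 → G μ z₂ = 0 →
      ∃ y ∈ Ioo z₁ z₂, f1 (y, μ) = 1 := by
    intro μ z₁ z₂ hlt hz₁ hz₂
    obtain ⟨c, hc, hc0⟩ := exists_hasDerivAt_eq_zero hlt (hGcont μ).continuousOn
      (by rw [hz₁, hz₂]) (fun x _ => hGd μ x)
    exact ⟨c, hc, by linarith⟩
  -- final assembly
  refine ⟨δ, hδ, μ₀, hμ₀, ?_, ?_, ?_⟩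
  · -- μ < 0 : no fixed points
    intro μ hμ x hxmem hfix
    have hxd : |x| ≤ δ := le_of_lt (abs_lt.2 ⟨hxmem.1, hxmem.2⟩)
    have hμm : μ ∈ Icc (-δ) δ := mem_Icc.2 ⟨by linarith [hμ.1], by linarith [hμ.2, hδ]⟩
    have h0m : (0 : ℝ) ∈ Icc (-δ) δ := mem_Icc.2 ⟨by linarith, hδ.le⟩
    have hlt : G μ x < G 0 x := hmonoμ x hxd hμm h0m hμ.2
    have hle : G 0 x ≤ 0 := by
      rcases eq_or_ne x 0 with h | h
      · rw [h, hG00]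
      · exact (hneg x (mem_Icc.2 ⟨hxmem.1.le, hxmem.2.le⟩) h).le
    have : G μ x = 0 := by simp [hGdef, hfix]
    linarith
  · -- μ = 0 : unique fixed point x = 0
    intro x hxmem
    constructor
    · intro hfix
      by_contra h
      have : G 0 x < 0 := hneg x (mem_Icc.2 ⟨hxmem.1.le, hxmem.2.le⟩) h
      have : G 0 x = 0 := by simp [hGdef, hfix]
      linarith
    · intro h; rw [h]; exact hf0
  · -- μ > 0 : exactly two fixed points
    intro μ hμ
    have hμd : |μ| ≤ δ := by
      rw [abs_le]; exact ⟨by linarith [hμ.1], by linarith [hμ.2, hμ₀δ]⟩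
    have hμm : μ ∈ Icc (-δ) δ := mem_Icc.2 (abs_le.1 hμd)
    have h0m : (0 : ℝ) ∈ Icc (-δ) δ := mem_Icc.2 ⟨by linarith, hδ.le⟩
    have hG0pos : 0 < G μ 0 := by
      have h' : G 0 0 < G μ 0 := hmonoμ 0 (by simp [hδ.le]) h0m hμm hμ.1
      rwa [hG00] at h'
    obtain ⟨hend1, hend2⟩ := hμend μ (by rw [abs_le]; exact ⟨by linarith [hμ.1, hμ₀], hμ.2.le⟩)
    -- IVT on [-δ, 0]
    obtain ⟨x₁, hx₁mem, hx₁⟩ : ∃ x₁ ∈ Ioo (-δ) (0 : ℝ), G μ x₁ = 0 := by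
      have hsub := intermediate_value_Ioo (by linarith : -δ ≤ (0:ℝ))
        ((hGcont μ).continuousOn : ContinuousOn (G μ) (Icc (-δ) 0))
      have : (0 : ℝ) ∈ Ioo (G μ (-δ)) (G μ 0) := ⟨hend2, hG0pos⟩
      obtain ⟨x₁, hx₁mem, hx₁⟩ := hsub this
      exact ⟨x₁, hx₁mem, hx₁⟩
    obtain ⟨x₂, hx₂mem, hx₂⟩ : ∃ x₂ ∈ Ioo (0 : ℝ) δ, G μ x₂ = 0 := by
      have hsub := intermediate_value_Ioo' (by linarith : (0:ℝ) ≤ δ)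
        ((hGcont μ).continuousOn : ContinuousOn (G μ) (Icc 0 δ))
      have : (0 : ℝ) ∈ Ioo (G μ δ) (G μ 0) := ⟨hend1, hG0pos⟩
      obtain ⟨x₂, hx₂mem, hx₂⟩ := hsub this
      exact ⟨x₂, hx₂mem, hx₂⟩
    have hx₁I : x₁ ∈ Ioo (-δ) δ := ⟨hx₁mem.1, by linarith [hx₁mem.2]⟩
    have hx₂I : x₂ ∈ Ioo (-δ) δ := ⟨by linarith [hx₂mem.1], hx₂mem.2⟩
    have hx₁₂ : x₁ < x₂ := lt_trans hx₁mem.2 hx₂mem.1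
    have hIccsub : Ioo (-δ) δ ⊆ Icc (-δ) δ := Ioo_subset_Icc_self
    refine ⟨x₁, x₂, hx₁I, hx₂I, hx₁₂, by simpa [hGdef, sub_eq_zero] using hx₁,
      by simpa [hGdef, sub_eq_zero] using hx₂, ?_⟩
    intro x hxI hfix
    have hxz : G μ x = 0 := by simp [hGdef, hfix]
    by_contra h
    push_neg at h
    obtain ⟨h1, h2⟩ := h
    -- x is a third zero; derive contradiction
    have key : ∀ a b c : ℝ, a ∈ Ioo (-δ) δ → b ∈ Ioo (-δ) δ → c ∈ Ioo (-δ) δ →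
        a < b → b < c → G μ a = 0 → G μ b = 0 → G μ c = 0 → False := by
      intro a b c ha hb hc hab hbc za zb zc
      obtain ⟨y₁, hy₁, ey₁⟩ := rolle μ a b hab za zb
      obtain ⟨y₂, hy₂, ey₂⟩ := rolle μ b c hbc zb zc
      have hy₁I : y₁ ∈ Icc (-δ) δ :=
        mem_Icc.2 ⟨by linarith [hy₁.1, ha.1], by linarith [hy₁.2, hb.2]⟩
      have hy₂I : y₂ ∈ Icc (-δ) δ :=
        mem_Icc.2 ⟨by linarith [hy₂.1, hb.1], by linarith [hy₂.2, hc.2]⟩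
      exact noTwo μ hμd y₁ y₂ hy₁I hy₂I (by linarith [hy₁.2, hy₂.1]) ey₁ ey₂
    rcases lt_trichotomy x x₁ with hlt | heq | hgt
    · exact key x x₁ x₂ hxI hx₁I hx₂I hlt hx₁₂ hxz hx₁ hx₂
    · exact h1 heq
    · rcases lt_trichotomy x x₂ with hlt2 | heq2 | hgt2
      · exact key x₁ x x₂ hx₁I hxI hx₂I hgt hlt2 hx₁ hxz hx₂
      · exact h2 heq2
      · exact key x₁ x₂ x hx₁I hx₂I hxI hx₁₂ hgt2 hx₁ hx₂ hxz
end
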